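/- Let σ₀ ≠ 0, μ₀ ∈ ℝ, and let h : ℝ → ℝ be continuously differentiable. Define ĝ₁₁(θ,x) = 1/σ₀ + (h(x − (μ₀/σ₀) sin θ) − 1/σ₀) cos²θ on (−π/2, π/2) × ℝ. Then ĝ₁₁ satisfies the transport equation σ₀ ∂ĝ₁₁/∂θ + μ₀ cos θ ∂ĝ₁₁/∂x + 2σ₀ tan θ · ĝ₁₁ − 2 tan θ = 0 at every point of (−π/2, π/2) × ℝ, and ĝ₁₁(0,x) = h(x) for all x. -/

import Mathlib

/-!
Statement 5: `ĝ₁₁(θ,x) = 1/σ₀ + (h(x − (μ₀/σ₀) sin θ) − 1/σ₀) cos²θ` solves the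
transport equation `σ₀ ∂ĝ₁₁/∂θ + μ₀ cos θ ∂ĝ₁₁/∂x + 2σ₀ tan θ ĝ₁₁ − 2 tan θ = 0`
on `(−π/2, π/2) × ℝ`, with initial data `ĝ₁₁(0,x) = h(x)`.
-/

noncomputable section

open Real Set

/-- Partial derivative in the `θ` (first) direction. -/
def pdth (f : ℝ × ℝ → ℝ) (p : ℝ × ℝ) : ℝ := fderiv ℝ f p (1, 0)

/-- Partial derivative in the `x` (second) direction. -/
def pdx (f : ℝ × ℝ → ℝ) (p : ℝ × ℝ) : ℝ := fderiv ℝ f p (0, 1)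

/-- The strip `(−π/2, π/2) × ℝ`. -/
def strip : Set (ℝ × ℝ) := Ioo (-(π / 2)) (π / 2) ×ˢ (univ : Set ℝ)

theorem statement5 (σ₀ μ₀ : ℝ) (hσ₀ : σ₀ ≠ 0)
    (h : ℝ → ℝ) (hh : ContDiff ℝ 1 h)
    (G : ℝ × ℝ → ℝ)
    (hG : ∀ p : ℝ × ℝ, G p =
      1 / σ₀ + (h (p.2 - (μ₀ / σ₀) * Real.sin p.1) - 1 / σ₀) * Real.cos p.1 ^ 2) :
    (∀ p ∈ strip,
      σ₀ * pdth G p + μ₀ * Real.cos p.1 * pdx G p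
        + 2 * σ₀ * Real.tan p.1 * G p - 2 * Real.tan p.1 = 0) ∧
    (∀ x : ℝ, G (0, x) = h x) := by
  have hGfun : G = fun p : ℝ × ℝ =>
      1 / σ₀ + (h (p.2 - (μ₀ / σ₀) * Real.sin p.1) - 1 / σ₀) * Real.cos p.1 ^ 2 :=
    funext hG
  constructor
  · rintro ⟨θ, x⟩ hp
    have hθmem : θ ∈ Ioo (-(π / 2)) (π / 2) := hp.1
    have hcos : 0 < Real.cos θ := Real.cos_pos_of_mem_Ioo hθmem
    have hcne : Real.cos θ ≠ 0 := ne_of_gt hcos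
    set c : ℝ := μ₀ / σ₀ with hc
    set u : ℝ := x - c * Real.sin θ with hu
    -- derivative of p ↦ p.2 - c * sin p.1
    have hsin : HasFDerivAt (fun p : ℝ × ℝ => Real.sin p.1)
        ((Real.cos θ) • ContinuousLinearMap.fst ℝ ℝ ℝ) (θ, x) := by
      exact (Real.hasDerivAt_sin θ).comp_hasFDerivAt (θ, x) (hasFDerivAt_fst (𝕜 := ℝ) (E := ℝ) (F := ℝ))
    have hU : HasFDerivAt (fun p : ℝ × ℝ => p.2 - c * Real.sin p.1)
        (ContinuousLinearMap.snd ℝ ℝ ℝ - (c * Real.cos θ) • ContinuousLinearMap.fst ℝ ℝ ℝ)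
        (θ, x) := by
      refine ((hasFDerivAt_snd (𝕜 := ℝ) (E := ℝ) (F := ℝ) (p := (θ, x))).sub
        (hsin.const_mul c)).congr_fderiv ?_
      ext <;> simp [smul_smul]
    have hhd : HasDerivAt h (deriv h u) u :=
      ((hh.differentiable one_ne_zero) u).hasDerivAt
    have hHU : HasFDerivAt (fun p : ℝ × ℝ => h (p.2 - c * Real.sin p.1))
        ((deriv h u) • (ContinuousLinearMap.snd ℝ ℝ ℝ -
          (c * Real.cos θ) • ContinuousLinearMap.fst ℝ ℝ ℝ)) (θ, x) :=
      hhd.comp_hasFDerivAt (θ, x) hU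
    have hcos2 : HasFDerivAt (fun p : ℝ × ℝ => Real.cos p.1 ^ 2)
        ((2 * Real.cos θ * (-Real.sin θ)) • ContinuousLinearMap.fst ℝ ℝ ℝ) (θ, x) := by
      have hd : HasDerivAt (fun t : ℝ => Real.cos t ^ 2) (2 * Real.cos θ * (-Real.sin θ)) θ := by
        simpa using ((Real.hasDerivAt_cos θ).fun_pow 2)
      exact hd.comp_hasFDerivAt (θ, x) (hasFDerivAt_fst (𝕜 := ℝ) (E := ℝ) (F := ℝ))
    have hGd : HasFDerivAt G
        ((Real.cos θ ^ 2) • ((deriv h u) • (ContinuousLinearMap.snd ℝ ℝ ℝ -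
            (c * Real.cos θ) • ContinuousLinearMap.fst ℝ ℝ ℝ))
          + (h u - 1 / σ₀) • ((2 * Real.cos θ * (-Real.sin θ)) •
            ContinuousLinearMap.fst ℝ ℝ ℝ)) (θ, x) := by
      rw [hGfun]
      have := ((hHU.sub_const (1 / σ₀)).mul hcos2).const_add (1 / σ₀)
      rw [add_comm] at this
      simpa [← hu] using this
    have hpdth : pdth G (θ, x) =
        Real.cos θ ^ 2 * (deriv h u * (-(c * Real.cos θ)))
          + (h u - 1 / σ₀) * (2 * Real.cos θ * (-Real.sin θ)) := by
      rw [pdth, hGd.fderiv]; simp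
    have hpdx : pdx G (θ, x) = Real.cos θ ^ 2 * deriv h u := by
      rw [pdx, hGd.fderiv]; simp
    have hGval : G (θ, x) = 1 / σ₀ + (h u - 1 / σ₀) * Real.cos θ ^ 2 := hG (θ, x)
    simp only [hpdth, hpdx, hGval]
    rw [Real.tan_eq_sin_div_cos]
    have hc' : c = μ₀ / σ₀ := hc
    field_simp [hc']
    have hsc : σ₀ * c = μ₀ := by rw [hc']; field_simp
    linear_combination (-(Real.cos θ ^ 4 * deriv h u)) * hsc
  · intro x
    rw [hG]
    simp
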